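/- Let a,b,c,d,e,f be complex numbers satisfying ac + bd = -1, ae + bf = -1, and ce + df = -1. Define x = -bdf, y = -ace, s = ace + a + c + e, t = bdf + b + d + f. Then sy + xt + 1 = x^2 + y^2. -/
import Mathlib

theorem stmt_0 (a b c d e f : ℂ)
    (h1 : a*c + b*d = -1) (h2 : a*e + b*f = -1) (h3 : c*e + d*f = -1)
    (x y s t : ℂ)
    (hx : x = -(b*d*f)) (hy : y = -(a*c*e))
    (hs : s = a*c*e + a + c + e) (ht : t = b*d*f + b + d + f) :
    s*y + x*t + 1 = x^2 + y^2 := by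
  subst hx hy hs ht
  linear_combination ((-1)*c*e + (-1)*a*e + (-2)*a*c*e*e) * h1 +
    (1 + (-1)*c*d*e*f + (-1)*c*c*e*e + b*d + (-2)*b*c*d*d*e*f + (-2)*b*c*c*d*e*e) * h2 +
    (c*e + (-1)*b*f + (-1)*b*d + b*c*e*f + 2*b*c*d*e + (-2)*b*b*d*f + 2*b*b*c*d*e*f + a*c*e*e + 2*a*b*c*d*e*e) * h3
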